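/- Suppose m ≡ 46 (mod 48). Then j‴ ∈ J, P(j‴) ≠ 0, and for every j ∈ J with j ≠ j‴, either P(j) = 0 or V(j) < V(j‴); in particular, V attains its maximum on J uniquely at j‴. -/

import Mathlib

open Finset

/-- `s a` is the sum of the binary digits of `a`. -/
def sdig (a : ℕ) : ℕ := (Nat.digits 2 a).sum

/-- `carries a b` is the number of carries when adding `a` and `b` in base 2:
`c(a,b) = s(a) + s(b) - s(a+b)`. -/
def carries (a b : ℕ) : ℕ := sdig a + sdig b - sdig (a + b)

/-- The generalized binomial coefficient `C_r(x) = x(x-1)⋯(x-r+1)/r!` (with `C_0(x) = 1`). -/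
def genBinom (x : ℚ) (r : ℕ) : ℚ :=
  (∏ p ∈ Finset.range r, (x - p)) / (Nat.factorial r : ℚ)

/-- Membership in the index set `J`: here `j i` (for `i : Fin n`) is the paper's
`j_{i+1}`, so the defining relation `(2^n-1)j_1 + ⋯ + (2-1)j_n = m+1` becomes
`∑ k, (2^(n-k) - 1) * j k = m + 1`. -/
def inJ (n m : ℕ) (j : Fin n → ℕ) : Prop :=
  ∑ k : Fin n, (2 ^ (n - (k : ℕ)) - 1) * j k = m + 1

/-- `α_j(k)`: for `K : Fin n`, `alphaF n m j K` is the paper's `α_j(K+1)`, i.e.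
`m / 2^(n-K) - ∑_{I < K} 2^(K-I) j_{I+1}`. -/
def alphaF (n m : ℕ) (j : Fin n → ℕ) (K : Fin n) : ℚ :=
  (m : ℚ) / 2 ^ (n - (K : ℕ)) -
    ∑ I : Fin n, if (I : ℕ) < (K : ℕ) then 2 ^ ((K : ℕ) - (I : ℕ)) * (j I : ℚ) else 0

/-- `P(j) = ∏_{k=1}^n C_{j_k}(α_j(k))`. -/
def Pprod (n m : ℕ) (j : Fin n → ℕ) : ℚ :=
  ∏ k : Fin n, genBinom (alphaF n m j k) (j k)

/-- `V(j) = -ν(P(j))`, where `ν` is the 2-adic valuation on `ℚ`. -/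
def V (n m : ℕ) (j : Fin n → ℕ) : ℤ := - padicValRat 2 (Pprod n m j)



lemma sdig_zero : sdig 0 = 0 := by simp [sdig]

lemma sdig_two_mul (a : ℕ) : sdig (2 * a) = sdig a := by
  rcases Nat.eq_zero_or_pos a with h | h
  · simp [h]
  · unfold sdig
    rw [Nat.digits_def' (by norm_num) (by omega)]
    simp [Nat.mul_div_cancel_left _ (by norm_num : 0 < 2), Nat.mul_mod_right]

lemma sdig_two_mul_add_one (a : ℕ) : sdig (2 * a + 1) = sdig a + 1 := by
  unfold sdig
  rw [Nat.digits_def' (by norm_num) (by omega)]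
  have h1 : (2 * a + 1) % 2 = 1 := by omega
  have h2 : (2 * a + 1) / 2 = a := by omega
  rw [h1, h2]
  simp [Nat.add_comm]

lemma sdig_le (a : ℕ) : sdig a ≤ a := Nat.digit_sum_le 2 a


lemma sdig_succ_le (a : ℕ) : sdig (a + 1) ≤ sdig a + 1 := by
  induction a using Nat.strong_induction_on with
  | _ a ih =>
    rcases Nat.even_or_odd a with ⟨u, hu⟩ | ⟨u, hu⟩
    · have : a = 2 * u := by omega
      subst this
      rw [sdig_two_mul_add_one, sdig_two_mul]
    · subst hu
      have h1 : 2 * u + 1 + 1 = 2 * (u + 1) := by ring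
      rw [h1, sdig_two_mul, sdig_two_mul_add_one]
      rcases Nat.eq_zero_or_pos u with h | h
      · simp [h, sdig_zero]; have := sdig_le 1; omega
      · have := ih u (by omega)
        omega

lemma sdig_add_le (a b : ℕ) : sdig (a + b) ≤ sdig a + sdig b := by
  have key : ∀ s a b : ℕ, a + b = s → sdig (a + b) ≤ sdig a + sdig b := by
    intro s
    induction s using Nat.strong_induction_on with
    | _ s ih =>
    intro a b h
    subst h
    rcases Nat.eq_zero_or_pos (a + b) with h0 | h0
    · have : a = 0 ∧ b = 0 := by omega
      simp [this.1, this.2, sdig_zero]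
    rcases Nat.even_or_odd a with ⟨u, hu⟩ | ⟨u, hu⟩ <;>
      rcases Nat.even_or_odd b with ⟨v, hv⟩ | ⟨v, hv⟩
    · have ha : a = 2 * u := by omega
      have hb : b = 2 * v := by omega
      subst ha hb
      have h1 : 2 * u + 2 * v = 2 * (u + v) := by ring
      rw [h1, sdig_two_mul, sdig_two_mul, sdig_two_mul]
      exact ih (u + v) (by omega) u v rfl
    · have ha : a = 2 * u := by omega
      have hb : b = 2 * v + 1 := by omega
      subst ha hb
      have h1 : 2 * u + (2 * v + 1) = 2 * (u + v) + 1 := by ring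
      rw [h1, sdig_two_mul, sdig_two_mul_add_one, sdig_two_mul_add_one]
      have := ih (u + v) (by omega) u v rfl
      omega
    · have ha : a = 2 * u + 1 := by omega
      have hb : b = 2 * v := by omega
      subst ha hb
      have h1 : 2 * u + 1 + 2 * v = 2 * (u + v) + 1 := by ring
      rw [h1, sdig_two_mul, sdig_two_mul_add_one, sdig_two_mul_add_one]
      have := ih (u + v) (by omega) u v rfl
      omega
    · have ha : a = 2 * u + 1 := by omega
      have hb : b = 2 * v + 1 := by omega
      subst ha hb
      have h1 : 2 * u + 1 + (2 * v + 1) = 2 * (u + v + 1) := by ring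
      rw [h1, sdig_two_mul, sdig_two_mul_add_one, sdig_two_mul_add_one]
      have h2 := ih (u + v) (by omega) u v rfl
      have h3 := sdig_succ_le (u + v)
      omega
  exact key (a + b) a b rfl

lemma sdig_pow_mul (e a : ℕ) : sdig (2 ^ e * a) = sdig a := by
  induction e with
  | zero => simp
  | succ e ih => rw [pow_succ, mul_comm (2^e) 2, mul_assoc, sdig_two_mul, ih]

lemma sdig_add_two_le (w : ℕ) (hw : 4 ≤ w) : sdig w + 2 ≤ w := by
  rcases Nat.even_or_odd w with ⟨u, hu⟩ | ⟨u, hu⟩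
  · have h : w = 2 * u := by omega
    rw [h, sdig_two_mul]
    have := sdig_le u
    omega
  · have h : w = 2 * u + 1 := by omega
    rw [h, sdig_two_mul_add_one]
    have := sdig_le u
    omega

lemma sdig_sum_le {ι : Type*} (F : Finset ι) (f : ι → ℕ) :
    sdig (∑ i ∈ F, f i) ≤ ∑ i ∈ F, sdig (f i) := by
  induction F using Finset.cons_induction with
  | empty => simp [sdig_zero]
  | cons i F hi ih =>
    rw [Finset.sum_cons, Finset.sum_cons]
    exact le_trans (sdig_add_le _ _) (by omega)


lemma val_choose_add (a b : ℕ) :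
    padicValNat 2 ((a + b).choose b) + sdig (a + b) = sdig a + sdig b := by
  have h := @sub_one_mul_padicValNat_choose_eq_sub_sum_digits' 2 b a _
  have hle := sdig_add_le a b
  unfold sdig at *
  omega

lemma val_factorial_two (r : ℕ) : padicValNat 2 (r.factorial) + sdig r = r := by
  have h := @sub_one_mul_padicValNat_factorial 2 _ r
  have := sdig_le r
  unfold sdig at *
  omega


lemma padicValRat_prod {ι : Type*} (F : Finset ι) (f : ι → ℚ)
    (hf : ∀ i ∈ F, f i ≠ 0) :
    padicValRat 2 (∏ i ∈ F, f i) = ∑ i ∈ F, padicValRat 2 (f i) := by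
  induction F using Finset.cons_induction with
  | empty => simp
  | cons i F hi ih =>
    rw [Finset.prod_cons, Finset.sum_cons,
      padicValRat.mul (hf i (Finset.mem_cons_self i F))
        (Finset.prod_ne_zero_iff.2 fun j hj => hf j (Finset.mem_cons_of_mem hj)),
      ih (fun j hj => hf j (Finset.mem_cons_of_mem hj))]

lemma val_sub_nat (x : ℚ) (hx : padicValRat 2 x < 0) (p : ℕ) :
    x - p ≠ 0 ∧ padicValRat 2 (x - p) = padicValRat 2 x := by
  have hx0 : x ≠ 0 := by
    intro h; rw [h] at hx; simp [padicValRat.zero] at hx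
  rcases Nat.eq_zero_or_pos p with h | h
  · simp [h, hx0]
  · have hp0 : (-(p : ℚ)) ≠ 0 := by
      simp; omega
    have hvp : padicValRat 2 (-(p:ℚ)) = padicValNat 2 p := by
      rw [padicValRat.neg, padicValRat.of_nat]
    have hlt : padicValRat 2 x < padicValRat 2 (-(p:ℚ)) := by
      rw [hvp]; exact lt_of_lt_of_le hx (by positivity)
    have hne : x + (-(p:ℚ)) ≠ 0 := by
      intro hcon
      have : x = (p : ℚ) := by linarith [hcon]
      rw [this, padicValRat.of_nat] at hx
      have : (0:ℤ) ≤ (padicValNat 2 p : ℤ) := by positivity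
      omega
    have := padicValRat.add_eq_of_lt (p := 2) hne hx0 hp0 hlt
    constructor
    · intro hcon; apply hne; rw [← hcon]; ring
    · rw [show x - p = x + (-(p:ℚ)) by ring, this]

lemma genBinom_ne_zero_of_neg_val (x : ℚ) (hx : padicValRat 2 x < 0) (r : ℕ) :
    genBinom x r ≠ 0 ∧
    padicValRat 2 (genBinom x r) = r * padicValRat 2 x - padicValNat 2 (Nat.factorial r) := by
  have hprodne : ∀ p ∈ Finset.range r, x - (p:ℚ) ≠ 0 := fun p _ => (val_sub_nat x hx p).1
  have hfac : (Nat.factorial r : ℚ) ≠ 0 := by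
    exact_mod_cast Nat.factorial_ne_zero r
  have hne : (∏ p ∈ Finset.range r, (x - p)) ≠ 0 := Finset.prod_ne_zero_iff.2 hprodne
  constructor
  · exact div_ne_zero hne hfac
  · rw [genBinom, padicValRat.div (p := 2) hne hfac,
      padicValRat_prod _ _ hprodne]
    rw [Finset.sum_congr rfl (fun p _ => (val_sub_nat x hx p).2)]
    simp [padicValRat.of_nat, mul_comm]


lemma genBinom_succ (x : ℚ) (r : ℕ) :
    genBinom x (r + 1) = genBinom x r * (x - r) / (r + 1) := by
  rw [genBinom, genBinom, Finset.prod_range_succ, Nat.factorial_succ]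
  push_cast
  rw [div_mul_eq_mul_div, div_div, mul_comm ((r:ℚ) + 1)]

lemma genBinom_neg_int (y r : ℕ) :
    genBinom (-(y + 1 : ℚ)) r = (-1) ^ r * ((r + y).choose r : ℚ) := by
  induction r with
  | zero => simp [genBinom]
  | succ r ih =>
    rw [genBinom_succ, ih]
    have key : (r + y + 1) * (r + y).choose r = (r + y + 1).choose (r + 1) * (r + 1) := by
      simpa [Nat.succ_eq_add_one] using Nat.add_one_mul_choose_eq (r + y) r
    have key' : ((r + y + 1):ℚ) * ((r + y).choose r : ℚ) = ((r + y + 1).choose (r + 1) : ℚ) * (r + 1) := by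
      exact_mod_cast congrArg (Nat.cast : ℕ → ℚ) key
    have hr1 : ((r:ℚ) + 1) ≠ 0 := by positivity
    have hre : (r + 1 + y) = (r + y + 1) := by omega
    rw [hre, pow_succ, div_eq_iff hr1]
    push_cast
    push_cast at key'
    linear_combination ((-1:ℚ)^r * -1) * key'

lemma genBinom_nat_zero (x r : ℕ) (h : x < r) : genBinom (x : ℚ) r = 0 := by
  rw [genBinom, Finset.prod_eq_zero (Finset.mem_range.2 h) (by simp)]
  simp

lemma val_neg_one_pow_mul (r c : ℕ) (hc : c ≠ 0) :
    padicValRat 2 ((-1) ^ r * (c : ℚ)) = padicValNat 2 c := by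
  rcases Nat.even_or_odd r with hr | hr
  · rw [hr.neg_one_pow, one_mul, padicValRat.of_nat]
  · rw [hr.neg_one_pow, neg_one_mul, padicValRat.neg, padicValRat.of_nat]


lemma alphaF_eq (n m : ℕ) (j : Fin n → ℕ) (jj : ℕ → ℕ)
    (hjj : ∀ I : Fin n, jj (I : ℕ) = j I) (K : Fin n) :
    alphaF n m j K =
      (((m : ℤ) - ∑ I ∈ Finset.range (K : ℕ), 2 ^ (n - I) * jj I : ℤ) : ℚ) / 2 ^ (n - (K : ℕ)) := by
  have hK : (K : ℕ) < n := K.isLt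
  have h2 : ((2 : ℚ)) ^ (n - (K : ℕ)) ≠ 0 := by positivity
  rw [alphaF, eq_div_iff h2, sub_mul, div_mul_cancel₀ _ h2]
  push_cast
  congr 1
  have hconv : ∀ I : Fin n, (if (I : ℕ) < (K : ℕ) then (2:ℚ) ^ ((K:ℕ) - (I:ℕ)) * (j I : ℚ) else 0)
      = (fun I : ℕ => if I < (K : ℕ) then (2:ℚ) ^ ((K:ℕ) - I) * (jj I : ℚ) else 0) (I : ℕ) := by
    intro I; simp [hjj I]
  calc (∑ I : Fin n, if (I : ℕ) < (K : ℕ) then (2:ℚ) ^ ((K:ℕ) - (I:ℕ)) * (j I : ℚ) else 0) * 2 ^ (n - (K:ℕ))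
      = (∑ I ∈ Finset.range n, if I < (K : ℕ) then (2:ℚ) ^ ((K:ℕ) - I) * (jj I : ℚ) else 0) * 2 ^ (n - (K:ℕ)) := by
        rw [Finset.sum_congr rfl (fun I _ => hconv I)]
        exact congrArg (fun z => z * 2 ^ (n - (K:ℕ)))
          (Fin.sum_univ_eq_sum_range (fun I => if I < (K:ℕ) then (2:ℚ)^((K:ℕ)-I) * (jj I : ℚ) else 0) n)
    _ = ∑ I ∈ Finset.range (K : ℕ), ((2:ℚ) ^ ((K:ℕ) - I) * (jj I : ℚ)) * 2 ^ (n - (K:ℕ)) := by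
        rw [← Finset.sum_filter, ← Finset.sum_mul]
        congr 2
        ext x
        simp only [Finset.mem_filter, Finset.mem_range]
        omega
    _ = ∑ I ∈ Finset.range (K : ℕ), (2:ℚ) ^ (n - I) * (jj I : ℚ) := by
        apply Finset.sum_congr rfl
        intro I hI
        rw [Finset.mem_range] at hI
        rw [mul_assoc, mul_comm ((jj I : ℚ)), ← mul_assoc, ← pow_add]
        congr 2
        omega

lemma Pprod_eq (n m : ℕ) (j : Fin n → ℕ) (jj : ℕ → ℕ)
    (hjj : ∀ I : Fin n, jj (I : ℕ) = j I) :
    Pprod n m j = ∏ K ∈ Finset.range n,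
      genBinom ((((m : ℤ) - ∑ I ∈ Finset.range K, 2 ^ (n - I) * jj I : ℤ) : ℚ) / 2 ^ (n - K)) (jj K) := by
  rw [Pprod, ← Fin.prod_univ_eq_prod_range]
  apply Finset.prod_congr rfl
  intro K _
  rw [alphaF_eq n m j jj hjj K, hjj K]



lemma val_alpha (M : ℕ) (hM : M % 2 = 1) (c : ℤ) (hc : 4 ∣ c) (E : ℕ) (hE : 2 ≤ E) :
    padicValRat 2 ((((2 * (M : ℤ)) - c : ℤ) : ℚ) / 2 ^ E) = 1 - E ∧
    padicValRat 2 ((((2 * (M : ℤ)) - c : ℤ) : ℚ) / 2 ^ E) < 0 := by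
  obtain ⟨d, rfl⟩ := hc
  set w : ℤ := (M : ℤ) - 2 * d with hw
  have hwodd : ¬ (2:ℤ) ∣ w := by
    rw [hw]; omega
  have hwne : w ≠ 0 := by intro h0; rw [h0] at hwodd; exact hwodd (dvd_zero 2)
  have hnum : ((2 * (M:ℤ) - 4 * d : ℤ) : ℚ) = 2 * (w : ℚ) := by push_cast [hw]; ring
  have hvw : padicValRat 2 ((w : ℤ) : ℚ) = 0 := by
    rw [padicValRat.of_int, padicValInt.eq_zero_of_not_dvd]
    · simp
    · exact_mod_cast hwodd
  have hne2 : ((2:ℚ)) ≠ 0 := by norm_num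
  have hwq : ((w:ℤ):ℚ) ≠ 0 := by exact_mod_cast hwne
  have hpow : ((2:ℚ) ^ E) ≠ 0 := by positivity
  have hval : padicValRat 2 ((((2 * (M : ℤ)) - 4 * d : ℤ) : ℚ) / 2 ^ E) = 1 - E := by
    have h22 : padicValRat 2 (2:ℚ) = 1 := by
      have := padicValRat.self (p := 2) (by norm_num)
      simpa using this
    rw [hnum, padicValRat.div (p := 2) (mul_ne_zero hne2 hwq) hpow,
      padicValRat.mul (p := 2) hne2 hwq, hvw,
      padicValRat.pow (p := 2), h22]
    push_cast
    ring
  refine ⟨hval, ?_⟩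
  rw [hval]
  omega

lemma inJ_key (n' M : ℕ) (j : Fin (n' + 1) → ℕ) (jj : ℕ → ℕ)
    (hjj : ∀ I : Fin (n' + 1), jj (I : ℕ) = j I)
    (hJ : inJ (n' + 1) (2 * M) j) :
    2 * (∑ K ∈ Finset.range n', 2 ^ (n' - K) * jj K) + jj n'
      = 2 * M + 1 + ∑ K ∈ Finset.range n', jj K := by
  have h0 : ∑ K ∈ Finset.range (n' + 1), (2 ^ (n' + 1 - K) - 1) * jj K = 2 * M + 1 := by
    rw [← hJ]
    rw [← Fin.sum_univ_eq_sum_range (fun K => (2 ^ (n' + 1 - K) - 1) * jj K) (n' + 1)]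
    exact Finset.sum_congr rfl (fun K _ => by rw [hjj K])
  rw [Finset.sum_range_succ, show n' + 1 - n' = 1 by omega] at h0
  norm_num at h0
  have h1 : ∀ K ∈ Finset.range n',
      (2 ^ (n' + 1 - K) - 1) * jj K + jj K = 2 * (2 ^ (n' - K) * jj K) := by
    intro K hK
    rw [Finset.mem_range] at hK
    have he : 2 ^ (n' + 1 - K) = 2 * 2 ^ (n' - K) := by
      rw [← pow_succ']
      congr 1
      omega
    have hp : 1 ≤ 2 ^ (n' - K) := Nat.one_le_two_pow
    rw [he]
    obtain ⟨u, hu⟩ := Nat.exists_eq_add_of_le hp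
    rw [hu, show 2 * (1 + u) - 1 = 1 + 2 * u by omega]
    ring
  have h2 : ∑ K ∈ Finset.range n', ((2 ^ (n' + 1 - K) - 1) * jj K + jj K)
      = ∑ K ∈ Finset.range n', 2 * (2 ^ (n' - K) * jj K) :=
    Finset.sum_congr rfl h1
  rw [Finset.sum_add_distrib, ← Finset.mul_sum] at h2
  omega

lemma sum_pow_double (n' : ℕ) (jj : ℕ → ℕ) :
    ∑ I ∈ Finset.range n', 2 ^ (n' + 1 - I) * jj I
      = 2 * ∑ I ∈ Finset.range n', 2 ^ (n' - I) * jj I := by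
  rw [Finset.mul_sum]
  apply Finset.sum_congr rfl
  intro I hI
  rw [Finset.mem_range] at hI
  rw [show n' + 1 - I = (n' - I) + 1 by omega, pow_succ]
  ring

lemma Pprod_main (n' M : ℕ) (hn : 2 ≤ n') (hM : M % 2 = 1) (j : Fin (n' + 1) → ℕ)
    (jj : ℕ → ℕ) (hjj : ∀ I : Fin (n' + 1), jj (I : ℕ) = j I)
    (hJ : inJ (n' + 1) (2 * M) j) :
    (∑ K ∈ Finset.range n', 2 ^ (n' - K) * jj K ≤ M → Pprod (n' + 1) (2 * M) j = 0) ∧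
    (∀ y : ℕ, 1 ≤ y → ∑ K ∈ Finset.range n', 2 ^ (n' - K) * jj K = M + y →
      Pprod (n' + 1) (2 * M) j ≠ 0 ∧
      padicValRat 2 (Pprod (n' + 1) (2 * M) j)
        = (∑ K ∈ Finset.range n', ((sdig (jj K) : ℤ) - (n' + 1 - K : ℕ) * jj K))
          + padicValNat 2 ((jj n' + (y - 1)).choose (jj n'))) := by
  set S1 := ∑ K ∈ Finset.range n', 2 ^ (n' - K) * jj K with hS1def
  have hkey := inJ_key n' M j jj hjj hJ
  have hPeq := Pprod_eq (n' + 1) (2 * M) j jj hjj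
  rw [Finset.prod_range_succ] at hPeq
  -- last factor numerator
  have hlastnum : ((2 * M : ℤ) - ∑ I ∈ Finset.range n', 2 ^ (n' + 1 - I) * jj I : ℤ)
      = 2 * ((M : ℤ) - S1) := by
    have h := sum_pow_double n' jj
    rw [h, hS1def]
    push_cast
    ring
  have hlast : (((2 * (M:ℤ) - ∑ I ∈ Finset.range n', 2 ^ (n' + 1 - I) * jj I : ℤ) : ℚ)
      / 2 ^ (n' + 1 - n')) = ((M : ℚ) - S1) := by
    rw [show n' + 1 - n' = 1 by omega, hlastnum]
    push_cast
    ring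
  rw [show ((2 * M : ℕ) : ℤ) = 2 * (M : ℤ) by push_cast; ring] at hPeq
  -- factors K < n'
  have hfac : ∀ K ∈ Finset.range n',
      genBinom ((((2 * (M:ℤ) - (∑ I ∈ Finset.range K, 2 ^ (n' + 1 - I) * jj I : ℕ) : ℤ)) : ℚ)
          / 2 ^ (n' + 1 - K)) (jj K) ≠ 0 ∧
      padicValRat 2 (genBinom ((((2 * (M:ℤ) - (∑ I ∈ Finset.range K, 2 ^ (n' + 1 - I) * jj I : ℕ) : ℤ)) : ℚ)
          / 2 ^ (n' + 1 - K)) (jj K))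
        = (sdig (jj K) : ℤ) - (n' + 1 - K : ℕ) * jj K := by
    intro K hK
    rw [Finset.mem_range] at hK
    have hc : (4 : ℤ) ∣ ((∑ I ∈ Finset.range K, 2 ^ (n' + 1 - I) * jj I : ℕ) : ℤ) := by
      have h4 : (4 : ℕ) ∣ ∑ I ∈ Finset.range K, 2 ^ (n' + 1 - I) * jj I := by
        apply Finset.dvd_sum
        intro I hI
        rw [Finset.mem_range] at hI
        have : 2 ^ (n' + 1 - I) = 4 * 2 ^ (n' - 1 - I) := by
          rw [show (4:ℕ) = 2^2 by norm_num, ← pow_add]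
          congr 1
          omega
        rw [this, mul_assoc]
        exact Dvd.intro _ rfl
      exact_mod_cast h4
    have hE : 2 ≤ n' + 1 - K := by omega
    obtain ⟨hval, hneg⟩ := val_alpha M hM _ hc (n' + 1 - K) hE
    obtain ⟨hne, hv⟩ := genBinom_ne_zero_of_neg_val _ hneg (jj K)
    refine ⟨hne, ?_⟩
    rw [hv, hval]
    have hft := val_factorial_two (jj K)
    have hft' : (padicValNat 2 (Nat.factorial (jj K)) : ℤ) = (jj K : ℤ) - sdig (jj K) := by
      omega
    rw [hft']
    ring
  constructor
  · -- zero case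
    intro hle
    have hT : (M - S1) < jj n' := by omega
    have hcast3 : ((M : ℚ) - S1) = ((M - S1 : ℕ) : ℚ) := by
      have := Nat.cast_sub (R := ℚ) hle
      rw [this]
    rw [hPeq, hlast, hcast3, genBinom_nat_zero _ _ hT, mul_zero]
  · -- nonzero case
    intro y hy hS1y
    have hcast4 : ((M : ℚ) - S1) = -(((y - 1 : ℕ) : ℚ) + 1) := by
      have h1 : S1 = M + y := hS1y
      have h2 : ((y - 1 : ℕ) : ℚ) = (y : ℚ) - 1 := by
        have := Nat.cast_sub (R := ℚ) hy
        rw [this]; norm_num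
      rw [h1, h2]
      push_cast
      ring
    have hlastfac : genBinom ((M : ℚ) - S1) (jj n')
        = (-1) ^ (jj n') * (((jj n' + (y - 1)).choose (jj n') : ℕ) : ℚ) := by
      rw [hcast4, genBinom_neg_int]
    have hchoosepos : ((jj n' + (y - 1)).choose (jj n')) ≠ 0 :=
      Nat.ne_of_gt (Nat.choose_pos (Nat.le_add_right _ _))
    have hlastne : genBinom ((M : ℚ) - S1) (jj n') ≠ 0 := by
      rw [hlastfac]
      apply mul_ne_zero
      · exact pow_ne_zero _ (by norm_num)
      · exact_mod_cast hchoosepos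
    have hprodne : (∏ K ∈ Finset.range n',
        genBinom ((((2 * (M:ℤ) - (∑ I ∈ Finset.range K, 2 ^ (n' + 1 - I) * jj I : ℕ) : ℤ)) : ℚ)
          / 2 ^ (n' + 1 - K)) (jj K)) ≠ 0 :=
      Finset.prod_ne_zero_iff.2 (fun K hK => (hfac K hK).1)
    constructor
    · rw [hPeq, hlast]
      exact mul_ne_zero hprodne hlastne
    · rw [hPeq, hlast, padicValRat.mul (p := 2) hprodne hlastne,
        padicValRat_prod _ _ (fun K hK => (hfac K hK).1),
        Finset.sum_congr rfl (fun K hK => (hfac K hK).2),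
        hlastfac, val_neg_one_pow_mul _ _ hchoosepos]


lemma sdig_one : sdig 1 = 1 := by
  rw [show 1 = 2 * 0 + 1 by ring, sdig_two_mul_add_one, sdig_zero]

lemma sdig_two : sdig 2 = 1 := by
  rw [show 2 = 2 * 1 by ring, sdig_two_mul, sdig_one]

lemma sdig_five : sdig 5 = 2 := by
  rw [show 5 = 2 * 2 + 1 by ring, sdig_two_mul_add_one, sdig_two]

lemma sdig_16t13 (t : ℕ) : sdig (16 * t + 13) = sdig t + 3 := by
  rw [show 16 * t + 13 = 2 * (8 * t + 6) + 1 by ring, sdig_two_mul_add_one,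
    show 8 * t + 6 = 2 * (4 * t + 3) by ring, sdig_two_mul,
    show 4 * t + 3 = 2 * (2 * t + 1) + 1 by ring, sdig_two_mul_add_one,
    show 2 * t + 1 = 2 * t + 1 by ring, sdig_two_mul_add_one]

lemma sdig_8t6 (t : ℕ) : sdig (8 * t + 6) = sdig t + 2 := by
  rw [show 8 * t + 6 = 2 * (4 * t + 3) by ring, sdig_two_mul,
    show 4 * t + 3 = 2 * (2 * t + 1) + 1 by ring, sdig_two_mul_add_one,
    sdig_two_mul_add_one]

lemma sdig_8t7 (t : ℕ) : sdig (8 * t + 7) = sdig t + 3 := by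
  rw [show 8 * t + 7 = 2 * (4 * t + 3) + 1 by ring, sdig_two_mul_add_one,
    show 4 * t + 3 = 2 * (2 * t + 1) + 1 by ring, sdig_two_mul_add_one,
    sdig_two_mul_add_one]

lemma sdig_16t14 (t : ℕ) : sdig (16 * t + 14) = sdig t + 3 := by
  rw [show 16 * t + 14 = 2 * (8 * t + 7) by ring, sdig_two_mul, sdig_8t7]

lemma sdig_16t15 (t : ℕ) : sdig (16 * t + 15) = sdig t + 4 := by
  rw [show 16 * t + 15 = 2 * (8 * t + 7) + 1 by ring, sdig_two_mul_add_one, sdig_8t7]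

lemma sdig_32t30 (t : ℕ) : sdig (32 * t + 30) = sdig t + 4 := by
  rw [show 32 * t + 30 = 2 * (16 * t + 15) by ring, sdig_two_mul, sdig_16t15]

lemma sdig_32t28 (t : ℕ) : sdig (32 * t + 28) = sdig t + 3 := by
  rw [show 32 * t + 28 = 2 * (16 * t + 14) by ring, sdig_two_mul, sdig_16t14]

lemma sdig_8t8 (t : ℕ) : sdig (8 * t + 8) = sdig (t + 1) := by
  rw [show 8 * t + 8 = 2 ^ 3 * (t + 1) by ring, sdig_pow_mul]

lemma sdig_8t4 (t : ℕ) : sdig (8 * t + 4) = sdig t + 1 := by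
  rw [show 8 * t + 4 = 2 * (4 * t + 2) by ring, sdig_two_mul,
    show 4 * t + 2 = 2 * (2 * t + 1) by ring, sdig_two_mul, sdig_two_mul_add_one]

lemma sdig_8t9 (t : ℕ) : sdig (8 * t + 9) = sdig (t + 1) + 1 := by
  rw [show 8 * t + 9 = 2 * (4 * t + 4) + 1 by ring, sdig_two_mul_add_one,
    show 4 * t + 4 = 2 ^ 2 * (t + 1) by ring, sdig_pow_mul]

lemma two_pow_ge_add_five (e : ℕ) (he : 3 ≤ e) : e + 5 ≤ 2 ^ e := by
  induction e with
  | zero => omega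
  | succ e ih =>
    rcases Nat.lt_or_ge e 3 with h | h
    · interval_cases e <;> simp_all <;> omega
    · have := ih (by omega)
      have : 2 ^ e ≤ 2 ^ (e + 1) := by rw [pow_succ]; omega
      omega

lemma sum_support_pair {R : Type*} [AddCommMonoid R] (n' : ℕ) (hn : 2 ≤ n') (f : ℕ → R)
    (h0 : ∀ K, K < n' → K ≠ n' - 2 → K ≠ n' - 1 → f K = 0) :
    ∑ K ∈ Finset.range n', f K = f (n' - 2) + f (n' - 1) := by
  have hsub : ({n' - 2, n' - 1} : Finset ℕ) ⊆ Finset.range n' := by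
    intro x hx
    simp only [Finset.mem_insert, Finset.mem_singleton] at hx
    rw [Finset.mem_range]
    omega
  rw [← Finset.sum_subset hsub]
  · rw [Finset.sum_pair (by omega : n' - 2 ≠ n' - 1)]
  · intro x hx hnx
    simp only [Finset.mem_insert, Finset.mem_singleton] at hnx
    rw [Finset.mem_range] at hx
    push_neg at hnx
    exact h0 x hx hnx.1 hnx.2

lemma arith_main (n' t y : ℕ) (jj : ℕ → ℕ) (hn : 2 ≤ n')
    (hS1 : ∑ K ∈ Finset.range n', 2 ^ (n' - K) * jj K = 24 * t + 23 + y)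
    (hy : 1 ≤ y)
    (hT : 2 * y + jj n' = (∑ K ∈ Finset.range n', jj K) + 1)
    (hne : ¬(jj (n' - 2) = 1 ∧ jj (n' - 1) = 16 * t + 13 ∧ jj n' = 1 ∧
      ∀ K, K < n' - 2 → jj K = 0)) :
    -(32 * t + 24 - (sdig t : ℤ)) ≤
      (∑ K ∈ Finset.range n', ((sdig (jj K) : ℤ) - (n' + 1 - K : ℕ) * jj K))
        + padicValNat 2 ((jj n' + (y - 1)).choose (jj n')) := by
  set S1 := ∑ K ∈ Finset.range n', 2 ^ (n' - K) * jj K with hS1def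
  set A := ∑ K ∈ Finset.range n', jj K with hAdef
  set L := ∑ K ∈ Finset.range n', (n' + 1 - K) * jj K with hLdef
  set Ss := ∑ K ∈ Finset.range n', sdig (jj K) with hSsdef
  set D := ∑ K ∈ Finset.range n', (2 ^ (n' - K) - (n' + 1 - K)) * jj K with hDdef
  set c := padicValNat 2 ((jj n' + (y - 1)).choose (jj n')) with hcdef
  -- rewrite goal sum
  have hgoal : (∑ K ∈ Finset.range n', ((sdig (jj K) : ℤ) - (n' + 1 - K : ℕ) * jj K))
      = (Ss : ℤ) - (L : ℤ) := by
    rw [Finset.sum_sub_distrib, hSsdef, hLdef]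
    push_cast
    ring
  rw [hgoal]
  -- basic facts
  have hLD : L + D = S1 := by
    rw [hLdef, hDdef, hS1def, ← Finset.sum_add_distrib]
    apply Finset.sum_congr rfl
    intro K hK
    rw [Finset.mem_range] at hK
    have h2 : n' - K < 2 ^ (n' - K) := Nat.lt_two_pow_self
    have : (n' + 1 - K) + (2 ^ (n' - K) - (n' + 1 - K)) = 2 ^ (n' - K) := by omega
    rw [← add_mul, this]
  have hSs : sdig S1 ≤ Ss := by
    rw [hS1def, hSsdef]
    calc sdig (∑ K ∈ Finset.range n', 2 ^ (n' - K) * jj K)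
        ≤ ∑ K ∈ Finset.range n', sdig (2 ^ (n' - K) * jj K) := sdig_sum_le _ _
      _ = ∑ K ∈ Finset.range n', sdig (jj K) :=
          Finset.sum_congr rfl (fun K _ => sdig_pow_mul _ _)
  have hS1even : 2 ∣ S1 := by
    rw [hS1def]
    apply Finset.dvd_sum
    intro K hK
    rw [Finset.mem_range] at hK
    have : 2 ^ (n' - K) = 2 * 2 ^ (n' - K - 1) := by
      rw [← pow_succ']
      congr 1
      omega
    rw [this, mul_assoc]
    exact Dvd.intro _ rfl
  have hyodd : y % 2 = 1 := by omega
  have h2A : 2 * A ≤ S1 := by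
    rw [hAdef, hS1def, Finset.mul_sum]
    apply Finset.sum_le_sum
    intro K hK
    rw [Finset.mem_range] at hK
    have h2 : 2 ≤ 2 ^ (n' - K) := by
      calc 2 = 2 ^ 1 := by norm_num
        _ ≤ 2 ^ (n' - K) := Nat.pow_le_pow_right (by norm_num) (by omega)
    exact Nat.mul_le_mul_right _ h2
  have hyle : y ≤ 8 * t + 7 := by omega
  -- case analysis
  rcases (by omega : y = 8 * t + 7 ∨ y = 8 * t + 5 ∨ y ≤ 8 * t + 3) with hc1 | hc2 | hc3
  · -- y = 8t+7
    subst hc1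
    have hS1v : S1 = 32 * t + 30 := by omega
    by_cases hD : 2 ≤ D
    · have h1 : sdig S1 = sdig t + 4 := by rw [hS1v]; exact sdig_32t30 t
      omega
    · -- D ≤ 1 : identify structure
      have hzero : ∀ K, K < n' - 2 → jj K = 0 := by
        intro K hK
        by_contra hjk
        have h1 : 1 ≤ jj K := by omega
        have hterm : (2 ^ (n' - K) - (n' + 1 - K)) * jj K ≤ D :=
          Finset.single_le_sum (f := fun K => (2 ^ (n' - K) - (n' + 1 - K)) * jj K)
            (fun _ _ => Nat.zero_le _) (Finset.mem_range.2 (by omega))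
        have he3 : 3 ≤ n' - K := by omega
        have hp := two_pow_ge_add_five (n' - K) he3
        have : 4 ≤ (2 ^ (n' - K) - (n' + 1 - K)) := by omega
        have : 4 ≤ (2 ^ (n' - K) - (n' + 1 - K)) * jj K := by
          calc 4 = 4 * 1 := by ring
            _ ≤ (2 ^ (n' - K) - (n' + 1 - K)) * jj K := Nat.mul_le_mul (by omega) h1
        omega
      have hjn2le : jj (n' - 2) ≤ 1 := by
        have hterm : (2 ^ (n' - (n' - 2)) - (n' + 1 - (n' - 2))) * jj (n' - 2) ≤ D :=
          Finset.single_le_sum (f := fun K => (2 ^ (n' - K) - (n' + 1 - K)) * jj K)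
            (fun _ _ => Nat.zero_le _) (Finset.mem_range.2 (by omega))
        have h1 : n' - (n' - 2) = 2 := by omega
        have h2 : n' + 1 - (n' - 2) = 3 := by omega
        rw [h1, h2] at hterm
        norm_num at hterm
        omega
      -- compute the sums on 2-point support
      have hS1p : S1 = 2 ^ 2 * jj (n' - 2) + 2 ^ 1 * jj (n' - 1) := by
        rw [hS1def, sum_support_pair n' hn _ (fun K h1 h2 h3 => by rw [hzero K (by omega)]; ring),
          show n' - (n' - 2) = 2 by omega, show n' - (n' - 1) = 1 by omega]
      have hAp : A = jj (n' - 2) + jj (n' - 1) := by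
        rw [hAdef, sum_support_pair n' hn _ (fun K h1 h2 h3 => hzero K (by omega))]
      have hLp : L = 3 * jj (n' - 2) + 2 * jj (n' - 1) := by
        rw [hLdef, sum_support_pair n' hn _ (fun K h1 h2 h3 => by rw [hzero K (by omega)]; ring),
          show n' + 1 - (n' - 2) = 3 by omega, show n' + 1 - (n' - 1) = 2 by omega]
      have hSsp : Ss = sdig (jj (n' - 2)) + sdig (jj (n' - 1)) := by
        rw [hSsdef, sum_support_pair n' hn _ (fun K h1 h2 h3 => by rw [hzero K (by omega)]; exact sdig_zero)]
      rcases (by omega : jj (n' - 2) = 1 ∨ jj (n' - 2) = 0) with h1 | h0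
      · -- this is j3 : contradiction
        exfalso
        apply hne
        have hjn1 : jj (n' - 1) = 16 * t + 13 := by omega
        have hA : A = 16 * t + 14 := by omega
        have hTv : jj n' = 1 := by omega
        exact ⟨h1, hjn1, hTv, hzero⟩
      · -- jj (n'-2) = 0
        have hjn1 : jj (n' - 1) = 16 * t + 15 := by omega
        have hA : A = 16 * t + 15 := by omega
        have hTv : jj n' = 2 := by omega
        have hSsv : Ss = sdig t + 4 := by
          rw [hSsp, h0, hjn1, sdig_zero, sdig_16t15]
          omega
        have hLv : L = 32 * t + 30 := by omega
        have hcv : 2 ≤ c := by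
          rw [hcdef, hTv, show 2 + (8 * t + 7 - 1) = 8 * t + 8 by omega]
          have hk := val_choose_add (8 * t + 6) 2
          rw [show 8 * t + 6 + 2 = 8 * t + 8 by omega, sdig_8t8, sdig_8t6, sdig_two] at hk
          have := sdig_succ_le t
          omega
        omega
  · -- y = 8t+5
    subst hc2
    have hS1v : S1 = 32 * t + 28 := by omega
    by_cases hD : 1 ≤ D
    · have h1 : sdig S1 = sdig t + 3 := by rw [hS1v]; exact sdig_32t28 t
      omega
    · have hD0 : D = 0 := by omega
      have hzero : ∀ K, K < n' - 1 → jj K = 0 := by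
        intro K hK
        by_contra hjk
        have h1 : 1 ≤ jj K := by omega
        have hterm : (2 ^ (n' - K) - (n' + 1 - K)) * jj K ≤ D :=
          Finset.single_le_sum (f := fun K => (2 ^ (n' - K) - (n' + 1 - K)) * jj K)
            (fun _ _ => Nat.zero_le _) (Finset.mem_range.2 (by omega))
        have he2 : 2 ≤ n' - K := by omega
        have hp : n' - K + 2 ≤ 2 ^ (n' - K) := by
          rcases (by omega : n' - K = 2 ∨ 3 ≤ n' - K) with h | h
          · rw [h]; norm_num
          · have := two_pow_ge_add_five (n' - K) h; omega
        have h4 : 1 ≤ (2 ^ (n' - K) - (n' + 1 - K)) := by omega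
        have : 1 ≤ (2 ^ (n' - K) - (n' + 1 - K)) * jj K := by
          calc 1 = 1 * 1 := by ring
            _ ≤ (2 ^ (n' - K) - (n' + 1 - K)) * jj K := Nat.mul_le_mul h4 h1
        omega
      have hS1p : S1 = 2 ^ 2 * jj (n' - 2) + 2 ^ 1 * jj (n' - 1) := by
        rw [hS1def, sum_support_pair n' hn _ (fun K h1 h2 h3 => by rw [hzero K (by omega)]; ring),
          show n' - (n' - 2) = 2 by omega, show n' - (n' - 1) = 1 by omega]
      have hAp : A = jj (n' - 2) + jj (n' - 1) := by
        rw [hAdef, sum_support_pair n' hn _ (fun K h1 h2 h3 => hzero K (by omega))]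
      have hLp : L = 3 * jj (n' - 2) + 2 * jj (n' - 1) := by
        rw [hLdef, sum_support_pair n' hn _ (fun K h1 h2 h3 => by rw [hzero K (by omega)]; ring),
          show n' + 1 - (n' - 2) = 3 by omega, show n' + 1 - (n' - 1) = 2 by omega]
      have hSsp : Ss = sdig (jj (n' - 2)) + sdig (jj (n' - 1)) := by
        rw [hSsdef, sum_support_pair n' hn _ (fun K h1 h2 h3 => by rw [hzero K (by omega)]; exact sdig_zero)]
      have h0 : jj (n' - 2) = 0 := hzero _ (by omega)
      have hjn1 : jj (n' - 1) = 16 * t + 14 := by omega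
      have hA : A = 16 * t + 14 := by omega
      have hTv : jj n' = 5 := by omega
      have hSsv : Ss = sdig t + 3 := by
        rw [hSsp, h0, hjn1, sdig_zero, sdig_16t14]
        omega
      have hLv : L = 32 * t + 28 := by omega
      have hcv : 1 ≤ c := by
        rw [hcdef, hTv, show 5 + (8 * t + 5 - 1) = 8 * t + 9 by omega]
        have hk := val_choose_add (8 * t + 4) 5
        rw [show 8 * t + 4 + 5 = 8 * t + 9 by omega, sdig_8t9, sdig_8t4, sdig_five] at hk
        have := sdig_succ_le t
        omega
      omega
  · -- y ≤ 8t+3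
    have hw4 : 4 ≤ 8 * t + 7 - y := by omega
    set w := 8 * t + 7 - y with hwdef
    have hadd : sdig (32 * t + 30) ≤ sdig S1 + sdig w := by
      have : S1 + w = 32 * t + 30 := by omega
      calc sdig (32 * t + 30) = sdig (S1 + w) := by rw [this]
        _ ≤ sdig S1 + sdig w := sdig_add_le _ _
    have h30 : sdig (32 * t + 30) = sdig t + 4 := sdig_32t30 t
    have hw2 : sdig w + 2 ≤ w := sdig_add_two_le w hw4
    omega

lemma sum_support_triple {R : Type*} [AddCommMonoid R] (N : ℕ) (hn : 3 ≤ N) (f : ℕ → R)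
    (h0 : ∀ K, K < N → K ≠ N - 3 → K ≠ N - 2 → K ≠ N - 1 → f K = 0) :
    ∑ K ∈ Finset.range N, f K = f (N - 3) + f (N - 2) + f (N - 1) := by
  have hsub : ({N - 3, N - 2, N - 1} : Finset ℕ) ⊆ Finset.range N := by
    intro x hx
    simp only [Finset.mem_insert, Finset.mem_singleton] at hx
    rw [Finset.mem_range]
    omega
  rw [← Finset.sum_subset hsub]
  · rw [Finset.sum_insert (by simp; omega), Finset.sum_pair (by omega : N - 2 ≠ N - 1), add_assoc]
  · intro x hx hnx
    simp only [Finset.mem_insert, Finset.mem_singleton] at hnx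
    rw [Finset.mem_range] at hx
    push_neg at hnx
    exact h0 x hx hnx.1 hnx.2.1 hnx.2.2

/-- If `m ≡ 46 mod 48`, then `j‴ ∈ J`, `P(j‴) ≠ 0`, and every `j ∈ J` with
`j ≠ j‴` has `P(j) = 0` or `V(j) < V(j‴)`; in particular, `V` attains its
maximum on `J` uniquely at `j‴`. -/
theorem stmt14 (n m : ℕ) (hn : 3 ≤ n) (hm : 1 ≤ m) (hmn : m ≤ 2 ^ (n + 1) - 3)
    (h48 : m % 48 = 46)
    (j3 : Fin n → ℕ)
    (hj3 : j3 = fun k : Fin n =>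
      if (k : ℕ) = n - 3 then 1
      else if (k : ℕ) = n - 2 then (m - 7) / 3
      else if (k : ℕ) = n - 1 then 1 else 0) :
    inJ n m j3 ∧ Pprod n m j3 ≠ 0 ∧
      ∀ j : Fin n → ℕ, inJ n m j → j ≠ j3 →
        Pprod n m j = 0 ∨ V n m j < V n m j3 := by
  obtain ⟨t, rfl⟩ : ∃ t, m = 48 * t + 46 := ⟨m / 48, by omega⟩
  obtain ⟨n', rfl⟩ : ∃ n', n = n' + 1 := ⟨n - 1, by omega⟩
  have hn' : 2 ≤ n' := by omega
  have hm2M : 48 * t + 46 = 2 * (24 * t + 23) := by ring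
  have hModd : (24 * t + 23) % 2 = 1 := by omega
  set jj3 : ℕ → ℕ := fun K =>
    if K = n' - 2 then 1 else if K = n' - 1 then 16 * t + 13 else if K = n' then 1 else 0
    with hjj3def
  have hjj3 : ∀ I : Fin (n' + 1), jj3 (I : ℕ) = j3 I := by
    intro I
    rw [hj3, hjj3def]
    simp only
    rw [show n' + 1 - 3 = n' - 2 by omega, show n' + 1 - 2 = n' - 1 by omega,
      show n' + 1 - 1 = n' by omega, show (48 * t + 46 - 7) / 3 = 16 * t + 13 by omega]
  -- jj3 evaluations
  have hj3a : jj3 (n' - 2) = 1 := by rw [hjj3def]; simp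
  have hj3b : jj3 (n' - 1) = 16 * t + 13 := by
    rw [hjj3def]; simp only; rw [if_neg (by omega)]; simp
  have hj3c : jj3 n' = 1 := by
    rw [hjj3def]; simp only; rw [if_neg (by omega), if_neg (by omega)]; simp
  have hj3z : ∀ K, K < n' → K ≠ n' - 2 → K ≠ n' - 1 → jj3 K = 0 := by
    intro K h1 h2 h3
    rw [hjj3def]; simp only; rw [if_neg h2, if_neg h3, if_neg (by omega)]
  have hNidx : n' + 1 - 3 = n' - 2 ∧ n' + 1 - 2 = n' - 1 ∧ n' + 1 - 1 = n' := by omega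
  -- Goal 1 : inJ
  have hJ3 : inJ (n' + 1) (48 * t + 46) j3 := by
    rw [inJ]
    have hconv : ∀ I : Fin (n' + 1),
        (2 ^ (n' + 1 - (I : ℕ)) - 1) * j3 I
          = (fun K => (2 ^ (n' + 1 - K) - 1) * jj3 K) (I : ℕ) := by
      intro I; simp only [hjj3 I]
    rw [Finset.sum_congr rfl (fun I _ => hconv I),
      Fin.sum_univ_eq_sum_range (fun K => (2 ^ (n' + 1 - K) - 1) * jj3 K) (n' + 1),
      sum_support_triple (n' + 1) (by omega) _ (fun K h1 h2 h3 h4 => by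
        rw [hj3z K (by omega) (by omega) (by omega), mul_zero])]
    rw [hNidx.1, hNidx.2.1, hNidx.2.2, hj3a, hj3b, hj3c,
      show n' + 1 - (n' - 2) = 3 by omega, show n' + 1 - (n' - 1) = 2 by omega,
      show n' + 1 - n' = 1 by omega]
    norm_num
    omega
  have hJ3' : inJ (n' + 1) (2 * (24 * t + 23)) j3 := by rwa [hm2M] at hJ3
  have hS13 : ∑ K ∈ Finset.range n', 2 ^ (n' - K) * jj3 K = 24 * t + 23 + (8 * t + 7) := by
    rw [sum_support_pair n' hn' _ (fun K h1 h2 h3 => by rw [hj3z K h1 h2 h3, mul_zero]),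
      hj3a, hj3b, show n' - (n' - 2) = 2 by omega, show n' - (n' - 1) = 1 by omega]
    norm_num
    omega
  obtain ⟨hP3ne, hP3val⟩ :=
    (Pprod_main n' (24 * t + 23) hn' hModd j3 jj3 hjj3 hJ3').2 (8 * t + 7) (by omega) hS13
  have hval3 : padicValRat 2 (Pprod (n' + 1) (2 * (24 * t + 23)) j3)
      = (sdig t : ℤ) - (32 * t + 25) := by
    rw [hP3val, hj3c, show 1 + (8 * t + 7 - 1) = 8 * t + 7 by omega, Nat.choose_one_right,
      padicValNat.eq_zero_of_not_dvd (by omega),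
      sum_support_pair n' hn' _ (fun K h1 h2 h3 => by
        rw [hj3z K h1 h2 h3]; simp [sdig_zero]),
      hj3a, hj3b, sdig_one, sdig_16t13,
      show n' + 1 - (n' - 2) = 3 by omega, show n' + 1 - (n' - 1) = 2 by omega]
    push_cast
    ring
  refine ⟨hJ3, ?_, ?_⟩
  · rw [hm2M]; exact hP3ne
  · intro j hJ hjne
    set jjf : ℕ → ℕ := fun K => if h : K < n' + 1 then j ⟨K, h⟩ else 0 with hjjf
    have hjj : ∀ I : Fin (n' + 1), jjf (I : ℕ) = j I := by
      intro I
      rw [hjjf]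
      simp only
      rw [dif_pos I.isLt]
    have hJ' : inJ (n' + 1) (2 * (24 * t + 23)) j := by rwa [hm2M] at hJ
    have hPm := Pprod_main n' (24 * t + 23) hn' hModd j jjf hjj hJ'
    rcases le_or_gt (∑ K ∈ Finset.range n', 2 ^ (n' - K) * jjf K) (24 * t + 23) with hle | hgt
    · left
      rw [hm2M]
      exact hPm.1 hle
    · right
      set y := (∑ K ∈ Finset.range n', 2 ^ (n' - K) * jjf K) - (24 * t + 23) with hydef
      have hy1 : 1 ≤ y := by omega
      have hS1y : ∑ K ∈ Finset.range n', 2 ^ (n' - K) * jjf K = 24 * t + 23 + y := by omega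
      obtain ⟨hPne, hPval⟩ := hPm.2 y hy1 hS1y
      have hkey := inJ_key n' (24 * t + 23) j jjf hjj hJ'
      have hT : 2 * y + jjf n' = (∑ K ∈ Finset.range n', jjf K) + 1 := by omega
      have hne2 : ¬(jjf (n' - 2) = 1 ∧ jjf (n' - 1) = 16 * t + 13 ∧ jjf n' = 1 ∧
          ∀ K, K < n' - 2 → jjf K = 0) := by
        rintro ⟨h1, h2, h3, h4⟩
        apply hjne
        funext k
        rw [hj3]
        simp only
        rw [show n' + 1 - 3 = n' - 2 by omega, show n' + 1 - 2 = n' - 1 by omega,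
          show n' + 1 - 1 = n' by omega, show (48 * t + 46 - 7) / 3 = 16 * t + 13 by omega,
          ← hjj k]
        have hklt := k.isLt
        by_cases hc1 : (k : ℕ) = n' - 2
        · rw [if_pos hc1, hc1, h1]
        · rw [if_neg hc1]
          by_cases hc2 : (k : ℕ) = n' - 1
          · rw [if_pos hc2, hc2, h2]
          · rw [if_neg hc2]
            by_cases hc3 : (k : ℕ) = n'
            · rw [if_pos hc3, hc3, h3]
            · rw [if_neg hc3]
              exact h4 (k : ℕ) (by omega)
      have har := arith_main n' t y jjf hn' hS1y hy1 hT hne2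
      rw [V, V, hm2M, hPval, hval3]
      have hst : (0 : ℤ) ≤ (sdig t : ℤ) := by positivity
      linarith
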